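/- Let n ≥ 2, α ∈ (0,1), σ : ℝ → ℝ differentiable at 0 with σ(0) = 0 and σ'(0) > 0, and training inputs x₁,…,x_n ∈ ℝ^{p₁} not all columns zero. Let Y ∈ ℝⁿ have i.i.d. coordinates Yᵢ ~ N(b, ξ²) for some b ∈ ℝ, ξ > 0, define Λ(Y) = σ'(0) · max_k |∑ᵢ x_{i,k}(Yᵢ − Ȳ)| / ‖Y − Ȳ·1‖₂ (set to 0 if Y = Ȳ·1), and let λ_QUT be the (1−α)-quantile of Λ(Y); assume P(Λ(Y) = λ_QUT) = 0. Then with probability at least 1 − α, for every nonzero w₂ ∈ ℝ^{p₂}, the zero matrix is a local minimum of the map W₁ ↦ ‖Y − (μ_{W₁,w₂}(xᵢ))ᵢ‖₂ + λ_QUT·‖W₁‖₁, where μ_{W₁,w₂}(x) = Ȳ + ⟨w₂, σ(W₁x)⟩/‖w₂‖₂; consequently, with probability at least 1 − α the penalized problem admits a local minimum whose fitted function is constant. -/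

import Mathlib

open MeasureTheory ProbabilityTheory

/-- Sample mean `ȳ = (1/n)∑ᵢ yᵢ`. -/
noncomputable def sampleMean (n : ℕ) (y : Fin n → ℝ) : ℝ := (∑ i, y i) / n

/-- Two-layer network prediction
`μ_{W₁,w₂}(x) = ȳ + ⟨w₂, σ(W₁ x)⟩ / ‖w₂‖₂` (first-layer biases zero,
last-layer bias equal to the sample mean `ȳ`). -/
noncomputable def netPred (n p₁ p₂ : ℕ) (σ : ℝ → ℝ) (y : Fin n → ℝ)
    (w₂ : Fin p₂ → ℝ) (W₁ : Fin p₂ → Fin p₁ → ℝ) (x' : Fin p₁ → ℝ) : ℝ :=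
  sampleMean n y +
    (∑ j, w₂ j * σ (∑ k, W₁ j k * x' k)) / Real.sqrt (∑ j, (w₂ j) ^ 2)

/-- Penalized objective `W₁ ↦ ‖y − (μ_{W₁,w₂}(xᵢ))ᵢ‖₂ + λ·‖W₁‖₁`. -/
noncomputable def penObj (n p₁ p₂ : ℕ) (σ : ℝ → ℝ) (x : Fin n → Fin p₁ → ℝ)
    (y : Fin n → ℝ) (w₂ : Fin p₂ → ℝ) (lam : ℝ)
    (W₁ : Fin p₂ → Fin p₁ → ℝ) : ℝ :=
  Real.sqrt (∑ i, (y i - netPred n p₁ p₂ σ y w₂ W₁ (x i)) ^ 2) +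
    lam * ∑ j, ∑ k, |W₁ j k|

/-- The pivotal statistic `Λ(y) = σ'(0) · max_k |∑ᵢ x_{i,k}(yᵢ − ȳ)| / ‖y − ȳ·1‖₂`
(for `p₁ > 0` the `⨆` over `Fin p₁` is the maximum over `k`; when `y = ȳ·1` the
formula yields `0` by the division-by-zero convention, matching the piecewise
definition). -/
noncomputable def lamStat (n p₁ : ℕ) (s : ℝ) (x : Fin n → Fin p₁ → ℝ)
    (y : Fin n → ℝ) : ℝ :=
  s * (⨆ k : Fin p₁, |∑ i, x i k * (y i - sampleMean n y)|) /
    Real.sqrt (∑ i, (y i - sampleMean n y) ^ 2)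

lemma lamStat_meas {n p₁ : ℕ} (s : ℝ) (x : Fin n → Fin p₁ → ℝ) :
    Measurable (lamStat n p₁ s x) := by
  unfold lamStat sampleMean
  fun_prop

lemma lamStat_nonneg {n p₁ : ℕ} (hp₁ : 0 < p₁) {s : ℝ} (hs : 0 ≤ s)
    (x : Fin n → Fin p₁ → ℝ) (y : Fin n → ℝ) : 0 ≤ lamStat n p₁ s x y := by
  haveI : Nonempty (Fin p₁) := ⟨⟨0, hp₁⟩⟩
  unfold lamStat
  apply div_nonneg _ (Real.sqrt_nonneg _)
  apply mul_nonneg hs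
  exact le_trans (abs_nonneg _)
    (le_ciSup (f := fun k => |∑ i, x i k * (y i - sampleMean n y)|)
      (Set.Finite.bddAbove (Set.finite_range _)) ⟨0, hp₁⟩)

lemma aux_localMin {n p₁ p₂ : ℕ} (hp₁ : 0 < p₁)
    {σ : ℝ → ℝ} {s : ℝ} (hσ : HasDerivAt σ s 0) (hσ0 : σ 0 = 0) (hs : 0 < s)
    (x : Fin n → Fin p₁ → ℝ) (y : Fin n → ℝ) (w₂ : Fin p₂ → ℝ) (hw : w₂ ≠ 0)
    {lam : ℝ} (h : lamStat n p₁ s x y < lam) :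
    IsLocalMin (penObj n p₁ p₂ σ x y w₂ lam) 0 := by
  haveI : Nonempty (Fin p₁) := ⟨⟨0, hp₁⟩⟩
  set v : Fin n → ℝ := fun i => y i - sampleMean n y with hv_def
  have hpen0 : penObj n p₁ p₂ σ x y w₂ lam 0
      = Real.sqrt (∑ i, (v i) ^ 2) := by
    simp [penObj, netPred, hσ0, hv_def]
  by_cases hv : ∀ i, v i = 0
  · -- degenerate case: y is constant
    have hΛ : lamStat n p₁ s x y = 0 := by
      have hz : ∀ i, y i - sampleMean n y = 0 := fun i => hv i
      simp [lamStat, hz]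
    have hlam : 0 < lam := hΛ ▸ h
    apply Filter.Eventually.of_forall
    intro W₁
    have : penObj n p₁ p₂ σ x y w₂ lam 0 = 0 := by
      rw [hpen0]; simp [hv]
    rw [this]
    unfold penObj
    have h2 : (0:ℝ) ≤ lam * ∑ j, ∑ k, |W₁ j k| :=
      mul_nonneg hlam.le
        (Finset.sum_nonneg fun j _ => Finset.sum_nonneg fun k _ => abs_nonneg _)
    have h1 := Real.sqrt_nonneg (∑ i, (y i - netPred n p₁ p₂ σ y w₂ W₁ (x i)) ^ 2)
    linarith
  · push_neg at hv
    obtain ⟨i₀, hi₀⟩ := hv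
    set V : ℝ := Real.sqrt (∑ i, (v i) ^ 2) with hV_def
    have hV : 0 < V := by
      apply Real.sqrt_pos.2
      apply Finset.sum_pos' (fun i _ => sq_nonneg _) ⟨i₀, Finset.mem_univ _, pow_two_pos_of_ne_zero hi₀⟩
    have hVsq : V ^ 2 = ∑ i, (v i) ^ 2 := Real.sq_sqrt (by positivity)
    set wn : ℝ := Real.sqrt (∑ j, (w₂ j) ^ 2) with hwn_def
    have hwn : 0 < wn := by
      apply Real.sqrt_pos.2
      obtain ⟨j₀, hj₀⟩ := Function.ne_iff.1 hw
      exact Finset.sum_pos' (fun j _ => sq_nonneg _) ⟨j₀, Finset.mem_univ _, pow_two_pos_of_ne_zero hj₀⟩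
    have hwnj : ∀ j, |w₂ j| ≤ wn := by
      intro j
      rw [hwn_def, ← Real.sqrt_sq_eq_abs]
      exact Real.sqrt_le_sqrt (Finset.single_le_sum (fun j _ => sq_nonneg (w₂ j))
        (Finset.mem_univ j))
    set c : Fin p₁ → ℝ := fun k => ∑ i, x i k * v i with hc_def
    set M : ℝ := ⨆ k, |c k| with hM_def
    have hMk : ∀ k, |c k| ≤ M := by
      intro k
      rw [hM_def]
      exact le_ciSup (f := fun k => |c k|) (Set.Finite.bddAbove (Set.finite_range _)) k
    have hM0 : 0 ≤ M := le_trans (abs_nonneg _) (hMk ⟨0, hp₁⟩)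
    have hΛ : lamStat n p₁ s x y = s * M / V := rfl
    have hsM : s * M < lam * V := by
      rw [hΛ, div_lt_iff₀ hV] at h; linarith
    set X : ℝ := 1 + ∑ i, ∑ k, |x i k| with hX_def
    have hX0 : 0 < X := by
      have : (0:ℝ) ≤ ∑ i, ∑ k, |x i k| :=
        Finset.sum_nonneg fun i _ => Finset.sum_nonneg fun k _ => abs_nonneg _
      rw [hX_def]; linarith
    have hxik : ∀ i k, |x i k| ≤ X := by
      intro i k
      rw [hX_def]
      have h1 : |x i k| ≤ ∑ k, |x i k| :=
        Finset.single_le_sum (fun k _ => abs_nonneg (x i k)) (Finset.mem_univ k)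
      have h2 : ∑ k, |x i k| ≤ ∑ i, ∑ k, |x i k| :=
        Finset.single_le_sum (f := fun i => ∑ k, |x i k|)
          (fun i _ => Finset.sum_nonneg fun k _ => abs_nonneg _) (Finset.mem_univ i)
      linarith
    set C : ℝ := (∑ i, |v i|) * p₂ * X with hC_def
    have hC0 : 0 ≤ C := by
      have : (0:ℝ) ≤ ∑ i, |v i| := Finset.sum_nonneg fun i _ => abs_nonneg _
      positivity
    set ε : ℝ := (lam * V - s * M) / (C + 1) with hε_def
    have hε : 0 < ε := by
      apply div_pos (by linarith) (by linarith)
    have hεC : s * M + ε * C ≤ lam * V := by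
      have h1 : ε * (C + 1) = lam * V - s * M := by
        rw [hε_def]; field_simp
      nlinarith
    -- little-o bound from the derivative
    have hlo : ∀ᶠ t in nhds (0:ℝ), |σ t - s * t| ≤ ε * |t| := by
      have h1 := (hasDerivAt_iff_isLittleO.1 hσ).def hε
      simpa [hσ0, Real.norm_eq_abs, mul_comm] using h1
    obtain ⟨δ, hδ0, hδ⟩ := Metric.eventually_nhds_iff.1 hlo
    simp only [Real.dist_eq, sub_zero] at hδ
    -- the neighborhood on which 0 is a min
    have hcont : Continuous fun W₁ : Fin p₂ → Fin p₁ → ℝ => ∑ j, ∑ k, |W₁ j k| := by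
      fun_prop
    have hnbhd : ∀ᶠ W₁ : Fin p₂ → Fin p₁ → ℝ in nhds 0,
        (∑ j, ∑ k, |W₁ j k|) < δ / X := by
      have htd : Filter.Tendsto (fun W₁ : Fin p₂ → Fin p₁ → ℝ => ∑ j, ∑ k, |W₁ j k|)
          (nhds 0) (nhds 0) := by
        have := hcont.tendsto 0
        simpa using this
      exact htd.eventually_lt_const (by positivity)
    filter_upwards [hnbhd] with W₁ hW₁
    set N : ℝ := ∑ j, ∑ k, |W₁ j k| with hN_def
    have hN0 : 0 ≤ N :=
      Finset.sum_nonneg fun j _ => Finset.sum_nonneg fun k _ => abs_nonneg _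
    set t : Fin n → Fin p₂ → ℝ := fun i j => ∑ k, W₁ j k * x i k with ht_def
    have ht_bound : ∀ i j, |t i j| ≤ X * N := by
      intro i j
      calc |t i j| ≤ ∑ k, |W₁ j k * x i k| := Finset.abs_sum_le_sum_abs _ _
        _ ≤ ∑ k, |W₁ j k| * X := by
            apply Finset.sum_le_sum
            intro k _
            rw [abs_mul]
            exact mul_le_mul_of_nonneg_left (hxik i k) (abs_nonneg _)
        _ = X * ∑ k, |W₁ j k| := by rw [← Finset.sum_mul]; ring
        _ ≤ X * N := by
            apply mul_le_mul_of_nonneg_left _ hX0.le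
            exact Finset.single_le_sum (f := fun j => ∑ k, |W₁ j k|)
              (fun j _ => Finset.sum_nonneg fun k _ => abs_nonneg _) (Finset.mem_univ j)
    have ht_small : ∀ i j, |t i j| < δ := by
      intro i j
      calc |t i j| ≤ X * N := ht_bound i j
        _ < X * (δ / X) := by
            apply mul_lt_mul_of_pos_left hW₁ hX0
        _ = δ := by field_simp
    have hE : ∀ i j, |σ (t i j) - s * t i j| ≤ ε * |t i j| := fun i j =>
      hδ (ht_small i j)
    -- decompose the inner product sum
    set T : ℝ := ∑ i, ∑ j, v i * (w₂ j * σ (t i j)) with hT_def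
    have hT1 : (∑ i, ∑ j, v i * (w₂ j * (s * t i j))) ≤ wn * (s * M * N) := by
      have e1 : (∑ i, ∑ j, v i * (w₂ j * (s * t i j)))
          = ∑ j, ∑ k, w₂ j * (s * (W₁ j k * c k)) := by
        rw [Finset.sum_comm]
        apply Finset.sum_congr rfl
        intro j _
        rw [ht_def]
        simp only [hc_def, Finset.mul_sum, Finset.sum_mul]
        rw [Finset.sum_comm]
        apply Finset.sum_congr rfl; intro i _
        apply Finset.sum_congr rfl; intro k _
        ring
      rw [e1]
      calc (∑ j, ∑ k, w₂ j * (s * (W₁ j k * c k)))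
          ≤ ∑ j, ∑ k, |w₂ j * (s * (W₁ j k * c k))| := by
            apply Finset.sum_le_sum; intro j _
            exact le_trans (Finset.sum_le_sum fun k _ => le_abs_self _) (le_refl _)
        _ = ∑ j, ∑ k, |w₂ j| * (s * (|W₁ j k| * |c k|)) := by
            apply Finset.sum_congr rfl; intro j _
            apply Finset.sum_congr rfl; intro k _
            rw [abs_mul, abs_mul, abs_mul, abs_of_pos hs]
        _ ≤ ∑ j, ∑ k, wn * (s * (|W₁ j k| * M)) := by
            apply Finset.sum_le_sum; intro j _
            apply Finset.sum_le_sum; intro k _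
            have hh : s * (|W₁ j k| * |c k|) ≤ s * (|W₁ j k| * M) :=
              mul_le_mul_of_nonneg_left
                (mul_le_mul_of_nonneg_left (hMk k) (abs_nonneg _)) hs.le
            exact mul_le_mul (hwnj j) hh
              (mul_nonneg hs.le (mul_nonneg (abs_nonneg _) (abs_nonneg _))) hwn.le
        _ = wn * (s * M * N) := by
            rw [hN_def]
            simp only [Finset.mul_sum]
            apply Finset.sum_congr rfl; intro j _
            apply Finset.sum_congr rfl; intro k _
            ring
    have hT2 : (∑ i, ∑ j, v i * (w₂ j * (σ (t i j) - s * t i j)))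
        ≤ wn * (ε * C * N) := by
      calc (∑ i, ∑ j, v i * (w₂ j * (σ (t i j) - s * t i j)))
          ≤ ∑ i, ∑ j, |v i| * (|w₂ j| * |σ (t i j) - s * t i j|) := by
            apply Finset.sum_le_sum; intro i _
            apply Finset.sum_le_sum; intro j _
            calc v i * (w₂ j * (σ (t i j) - s * t i j))
                ≤ |v i * (w₂ j * (σ (t i j) - s * t i j))| := le_abs_self _
              _ = |v i| * (|w₂ j| * |σ (t i j) - s * t i j|) := by
                  rw [abs_mul, abs_mul]
        _ ≤ ∑ i, ∑ j, |v i| * (wn * (ε * (X * N))) := by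
            apply Finset.sum_le_sum; intro i _
            apply Finset.sum_le_sum; intro j _
            apply mul_le_mul_of_nonneg_left _ (abs_nonneg _)
            have hEb : |σ (t i j) - s * t i j| ≤ ε * (X * N) :=
              le_trans (hE i j) (mul_le_mul_of_nonneg_left (ht_bound i j) hε.le)
            exact mul_le_mul (hwnj j) hEb (abs_nonneg _) hwn.le
        _ = ∑ i, (p₂ : ℝ) * (|v i| * (wn * (ε * (X * N)))) := by
            apply Finset.sum_congr rfl; intro i _
            rw [Finset.sum_const, Finset.card_univ, Fintype.card_fin, nsmul_eq_mul]
            try ring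
        _ = (∑ i, |v i|) * ((p₂ : ℝ) * (wn * (ε * (X * N)))) := by
            rw [Finset.sum_mul]
            apply Finset.sum_congr rfl; intro i _
            ring
        _ = wn * (ε * C * N) := by rw [hC_def]; ring
    have hT : T ≤ wn * (lam * V * N) := by
      have e2 : T = (∑ i, ∑ j, v i * (w₂ j * (s * t i j)))
          + (∑ i, ∑ j, v i * (w₂ j * (σ (t i j) - s * t i j))) := by
        rw [hT_def, ← Finset.sum_add_distrib]
        apply Finset.sum_congr rfl; intro i _
        rw [← Finset.sum_add_distrib]
        apply Finset.sum_congr rfl; intro j _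
        ring
      rw [e2]
      have : wn * (s * M * N) + wn * (ε * C * N) ≤ wn * (lam * V * N) := by
        rw [← mul_add, ← add_mul]
        apply mul_le_mul_of_nonneg_left _ hwn.le
        exact mul_le_mul_of_nonneg_right hεC hN0
      linarith [hT1, hT2]
    -- the residual sum
    set r : Fin n → ℝ := fun i => (∑ j, w₂ j * σ (t i j)) / wn with hr_def
    have hvr : ∑ i, v i * r i ≤ lam * V * N := by
      have e3 : ∑ i, v i * r i = T / wn := by
        rw [hT_def, Finset.sum_div]
        apply Finset.sum_congr rfl; intro i _
        show v i * ((∑ j, w₂ j * σ (t i j)) / wn) = _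
        rw [← mul_div_assoc, Finset.mul_sum]
      rw [e3, div_le_iff₀ hwn]
      calc T ≤ wn * (lam * V * N) := hT
        _ = lam * V * N * wn := by ring
    -- Cauchy-Schwarz
    have hCS : V ^ 2 - ∑ i, v i * r i ≤ V * Real.sqrt (∑ i, (v i - r i) ^ 2) := by
      have e4 : V ^ 2 - ∑ i, v i * r i = ∑ i, v i * (v i - r i) := by
        rw [hVsq, ← Finset.sum_sub_distrib]
        apply Finset.sum_congr rfl; intro i _
        ring
      rw [e4]
      have h5 := Finset.sum_mul_sq_le_sq_mul_sq Finset.univ v (fun i => v i - r i)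
      calc ∑ i, v i * (v i - r i) ≤ |∑ i, v i * (v i - r i)| := le_abs_self _
        _ = Real.sqrt ((∑ i, v i * (v i - r i)) ^ 2) := (Real.sqrt_sq_eq_abs _).symm
        _ ≤ Real.sqrt ((∑ i, (v i) ^ 2) * ∑ i, (v i - r i) ^ 2) :=
            Real.sqrt_le_sqrt h5
        _ = V * Real.sqrt (∑ i, (v i - r i) ^ 2) := by
            rw [Real.sqrt_mul (by positivity), hV_def]
    -- conclude
    rw [hpen0]
    have hpenW : penObj n p₁ p₂ σ x y w₂ lam W₁
        = Real.sqrt (∑ i, (v i - r i) ^ 2) + lam * N := by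
      have e5 : ∀ i, y i - netPred n p₁ p₂ σ y w₂ W₁ (x i) = v i - r i := by
        intro i
        simp only [netPred, hv_def, hr_def, ht_def, hwn_def]
        try ring
      unfold penObj
      rw [hN_def]
      have e6 : (∑ i, (y i - netPred n p₁ p₂ σ y w₂ W₁ (x i)) ^ 2)
          = ∑ i, (v i - r i) ^ 2 :=
        Finset.sum_congr rfl fun i _ => by rw [e5 i]
      rw [e6]
    rw [hpenW]
    set A := Real.sqrt (∑ i, (v i - r i) ^ 2) with hA_def
    have hA0 : 0 ≤ A := Real.sqrt_nonneg _
    have h7 : V * (V - lam * N) ≤ V * A := by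
      have h8 : V ^ 2 - lam * V * N ≤ V * A := by linarith [hCS, hvr]
      calc V * (V - lam * N) = V ^ 2 - lam * V * N := by ring
        _ ≤ V * A := h8
    have h9 : V - lam * N ≤ A := le_of_mul_le_mul_left h7 hV
    linarith


/-- Theorem 2 instantiated for the two-layer network: with
`Y ~ N(b, ξ²)^⊗n`, `λ_QUT` the `(1−α)`-quantile of `Λ(Y)` and
`P(Λ(Y) = λ_QUT) = 0`, with probability at least `1 − α`: for every nonzero
`w₂` the zero matrix is a local minimum of
`W₁ ↦ ‖Y − (μ_{W₁,w₂}(xᵢ))ᵢ‖₂ + λ_QUT‖W₁‖₁`, and consequently the penalized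
problem admits a local minimum whose fitted function is constant (equal to `Ȳ`). -/
theorem qut_recovers_constant_two_layer
    (n p₁ p₂ : ℕ) (hn : 2 ≤ n) (hp₁ : 0 < p₁)
    (α : ℝ) (hα : α ∈ Set.Ioo (0 : ℝ) 1)
    (σ : ℝ → ℝ) (s : ℝ) (hσ : HasDerivAt σ s 0) (hσ0 : σ 0 = 0) (hs : 0 < s)
    (x : Fin n → Fin p₁ → ℝ) (hx : x ≠ 0)
    (b ξ : ℝ) (hξ : 0 < ξ)
    (P : Measure (Fin n → ℝ))
    (hP : P = Measure.pi fun _ : Fin n => gaussianReal b ⟨ξ ^ 2, sq_nonneg ξ⟩)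
    (lamQUT : ℝ)
    (hq : lamQUT = sInf {t : ℝ | 1 - α ≤ (P {y | lamStat n p₁ s x y ≤ t}).toReal})
    (hcont : P {y | lamStat n p₁ s x y = lamQUT} = 0) :
    1 - α ≤ (P {y | ∀ w₂ : Fin p₂ → ℝ, w₂ ≠ 0 →
        IsLocalMin (penObj n p₁ p₂ σ x y w₂ lamQUT) 0 ∧
        ∃ W₁ : Fin p₂ → Fin p₁ → ℝ,
          IsLocalMin (penObj n p₁ p₂ σ x y w₂ lamQUT) W₁ ∧
          ∀ x' : Fin p₁ → ℝ,
            netPred n p₁ p₂ σ y w₂ W₁ x' = sampleMean n y}).toReal := by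

  haveI : IsProbabilityMeasure P := by
    subst hP
    exact @Measure.pi.instIsProbabilityMeasure _ _ _ _ _ (fun _ => instIsProbabilityMeasureGaussianReal _ _)
  set Λ := lamStat n p₁ s x with hΛ_def
  have hmeas : Measurable Λ := lamStat_meas s x
  have hΛ0 : ∀ y, 0 ≤ Λ y := fun y => lamStat_nonneg hp₁ hs.le x y
  set S := {t : ℝ | 1 - α ≤ (P {y | Λ y ≤ t}).toReal} with hS_def
  have hmono : ∀ t t' : ℝ, t ≤ t' → P {y | Λ y ≤ t} ≤ P {y | Λ y ≤ t'} :=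
    fun t t' h => measure_mono (fun y hy => le_trans hy h)
  have hup : ∀ t ∈ S, ∀ t', t ≤ t' → t' ∈ S := by
    intro t ht t' h
    exact le_trans ht (ENNReal.toReal_mono (measure_ne_top _ _) (hmono t t' h))
  have hSne : S.Nonempty := by
    have hU : ⋃ m : ℕ, {y | Λ y ≤ (m:ℝ)} = Set.univ := by
      ext y
      simp only [Set.mem_iUnion, Set.mem_univ, iff_true, Set.mem_setOf_eq]
      exact exists_nat_ge (Λ y)
    have hmon : Monotone fun m : ℕ => {y | Λ y ≤ (m:ℝ)} := by
      intro a b hab y hy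
      simp only [Set.mem_setOf_eq] at hy ⊢
      exact le_trans hy (by exact_mod_cast hab)
    have htend := tendsto_measure_iUnion_atTop (μ := P) hmon
    rw [hU, measure_univ] at htend
    have h1 : ENNReal.ofReal (1 - α) < 1 := by
      rw [ENNReal.ofReal_lt_one]; linarith [hα.1]
    obtain ⟨m, hm⟩ := (htend.eventually_const_le h1).exists
    exact ⟨(m:ℝ), (ENNReal.ofReal_le_iff_le_toReal (measure_ne_top _ _)).1 hm⟩
  have hmem : ∀ m : ℕ, lamQUT + 1/(m+1) ∈ S := by
    intro m
    have h1 : sInf S < lamQUT + 1/(m+1) := by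
      have h2 : (0:ℝ) < 1/((m:ℝ)+1) := by positivity
      have h0 : sInf S ≤ lamQUT := le_of_eq hq.symm
      push_cast
      linarith
    obtain ⟨u, huS, hu⟩ := exists_lt_of_csInf_lt hSne h1
    exact hup u huS _ hu.le
  have hinter : {y | Λ y ≤ lamQUT} = ⋂ m : ℕ, {y | Λ y ≤ lamQUT + 1/(m+1)} := by
    ext y
    simp only [Set.mem_setOf_eq, Set.mem_iInter]
    constructor
    · intro hy m
      have h2 : (0:ℝ) < 1/((m:ℝ)+1) := by positivity
      push_cast
      linarith
    · intro hy
      have htd : Filter.Tendsto (fun m : ℕ => lamQUT + 1/((m:ℝ)+1))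
          Filter.atTop (nhds lamQUT) := by
        have h3 := tendsto_one_div_add_atTop_nhds_zero_nat (𝕜 := ℝ)
        simpa using tendsto_const_nhds.add h3
      exact ge_of_tendsto' htd (fun m => hy m)
  have hF : ENNReal.ofReal (1 - α) ≤ P {y | Λ y ≤ lamQUT} := by
    have hms : ∀ m : ℕ, NullMeasurableSet {y | Λ y ≤ lamQUT + 1/(m+1)} P :=
      fun m => (hmeas measurableSet_Iic).nullMeasurableSet
    have hant : Antitone fun m : ℕ => {y | Λ y ≤ lamQUT + 1/((m:ℕ)+1)} := by
      intro a b hab y hy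
      have h4 : 1/((b:ℝ)+1) ≤ 1/((a:ℝ)+1) := by
        apply one_div_le_one_div_of_le (by positivity)
        have : (a:ℝ) ≤ b := by exact_mod_cast hab
        linarith
      simp only [Set.mem_setOf_eq] at hy ⊢
      push_cast at hy ⊢
      linarith
    have htm := tendsto_measure_iInter_atTop (μ := P) hms hant ⟨0, measure_ne_top _ _⟩
    rw [← hinter] at htm
    apply ge_of_tendsto htm
    apply Filter.Eventually.of_forall
    intro m
    exact (ENNReal.ofReal_le_iff_le_toReal (measure_ne_top _ _)).2 (hmem m)
  have hlt : ENNReal.ofReal (1 - α) ≤ P {y | Λ y < lamQUT} := by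
    have hsplit : {y | Λ y ≤ lamQUT} ⊆ {y | Λ y < lamQUT} ∪ {y | Λ y = lamQUT} := by
      intro y hy
      rcases lt_or_eq_of_le (show Λ y ≤ lamQUT from hy) with h | h
      · exact Or.inl h
      · exact Or.inr h
    calc ENNReal.ofReal (1 - α) ≤ P {y | Λ y ≤ lamQUT} := hF
      _ ≤ P ({y | Λ y < lamQUT} ∪ {y | Λ y = lamQUT}) := measure_mono hsplit
      _ ≤ P {y | Λ y < lamQUT} + P {y | Λ y = lamQUT} := measure_union_le _ _
      _ = P {y | Λ y < lamQUT} := by rw [hcont, add_zero]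
  have hincl : {y | Λ y < lamQUT} ⊆ {y | ∀ w₂ : Fin p₂ → ℝ, w₂ ≠ 0 →
      IsLocalMin (penObj n p₁ p₂ σ x y w₂ lamQUT) 0 ∧
      ∃ W₁ : Fin p₂ → Fin p₁ → ℝ,
        IsLocalMin (penObj n p₁ p₂ σ x y w₂ lamQUT) W₁ ∧
        ∀ x' : Fin p₁ → ℝ,
          netPred n p₁ p₂ σ y w₂ W₁ x' = sampleMean n y} := by
    intro y hy w₂ hw
    have hloc := aux_localMin (p₂ := p₂) hp₁ hσ hσ0 hs x y w₂ hw hy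
    refine ⟨hloc, 0, hloc, fun x' => ?_⟩
    simp [netPred, hσ0]
  have hfin := le_trans hlt (measure_mono hincl)
  exact (ENNReal.ofReal_le_iff_le_toReal (measure_ne_top _ _)).1 hfin
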